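/- arXiv:1305.7252 — 2 statements merged into one kernel-verified Lean document; each statement's English description precedes it below -/
import Mathlib

section
/- Let $X_1,\ldots,X_r$ be independent random variables, each exponentially distributed with rate $1$. Let $\mu_1 > 0$ and $\mu_2,\ldots,\mu_r \le 0$ be real numbers. Then for every $c \ge 0$, $\;\mathbb{P}\big(\sum_{i=1}^r \mu_i X_i > c\big) = \dfrac{e^{-c/\mu_1}}{\prod_{i=2}^r \big(1 - \mu_i/\mu_1\big)}$. -/
open MeasureTheory ProbabilityTheory Finset Real Set

-- integral of exp(-(b*x)) over Ioi 0
lemma aux_lint_exp_rate {b : ℝ} (hb : 0 < b) :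
    ∫⁻ x in Set.Ioi (0:ℝ), ENNReal.ofReal (Real.exp (-(b * x))) = ENNReal.ofReal (1 / b) := by
  have hint : IntegrableOn (fun x => Real.exp (-(b * x))) (Set.Ioi (0:ℝ)) := by
    simpa [neg_mul] using exp_neg_integrableOn_Ioi 0 hb
  rw [← ofReal_integral_eq_lintegral_ofReal hint (ae_of_all _ fun x => (Real.exp_pos _).le)]
  congr 1
  have hderiv : ∀ x ∈ Set.Ici (0:ℝ),
      HasDerivAt (fun y => -Real.exp (-(b * y)) / b) (Real.exp (-(b * x))) x := by
    intro x _
    have := (ProbabilityTheory.hasDerivAt_neg_exp_mul_exp (r := b) (x := x)).div_const b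
    simpa [mul_comm, mul_div_assoc, mul_div_cancel_left₀ _ hb.ne'] using this
  have htend : Filter.Tendsto (fun y => -Real.exp (-(b * y)) / b) Filter.atTop (nhds 0) := by
    have h1 : Filter.Tendsto (fun y : ℝ => b * y) Filter.atTop Filter.atTop :=
      Filter.Tendsto.const_mul_atTop hb Filter.tendsto_id
    have h2 : Filter.Tendsto (fun y : ℝ => Real.exp (-(b * y))) Filter.atTop (nhds 0) :=
      Real.tendsto_exp_atBot.comp (Filter.tendsto_neg_atTop_atBot.comp h1)
    simpa using (h2.neg.div_const b)
  have := integral_Ioi_of_hasDerivAt_of_tendsto' hderiv hint htend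
  rw [this]
  simp [Real.exp_zero]
  ring

lemma aux_expMeasure_eq : expMeasure 1 = volume.withDensity (exponentialPDF 1) := rfl

lemma aux_measurable_expPDF : Measurable (exponentialPDF 1) :=
  (measurable_exponentialPDFReal 1).ennreal_ofReal

lemma aux_expMeasure_Ioi {u : ℝ} (hu : 0 ≤ u) :
    expMeasure 1 (Set.Ioi u) = ENNReal.ofReal (Real.exp (-u)) := by
  rw [aux_expMeasure_eq, withDensity_apply _ measurableSet_Ioi]
  have h1 : ∀ x ∈ Set.Ioi u, exponentialPDF 1 x = ENNReal.ofReal (Real.exp (-(1 * x))) := by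
    intro x hx
    rw [exponentialPDF_of_nonneg (le_trans hu (le_of_lt hx))]
    norm_num
  rw [setLIntegral_congr_fun measurableSet_Ioi h1]
  have hint : IntegrableOn (fun x => Real.exp (-(1 * x))) (Set.Ioi u) := by
    simpa [neg_mul] using exp_neg_integrableOn_Ioi u zero_lt_one
  rw [← ofReal_integral_eq_lintegral_ofReal hint (ae_of_all _ fun x => (Real.exp_pos _).le)]
  congr 1
  simpa using integral_exp_neg_Ioi u

lemma aux_expMeasure_neg : expMeasure 1 (Set.Iio 0) = 0 := by
  rw [aux_expMeasure_eq, withDensity_apply _ measurableSet_Iio]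
  exact lintegral_exponentialPDF_of_nonpos le_rfl

lemma aux_lint_mgf {a : ℝ} (ha : a ≤ 0) :
    ∫⁻ x, ENNReal.ofReal (Real.exp (a * x)) ∂(expMeasure 1)
      = ENNReal.ofReal (1 / (1 - a)) := by
  rw [aux_expMeasure_eq,
    lintegral_withDensity_eq_lintegral_mul _ aux_measurable_expPDF
      (show Measurable fun x : ℝ => ENNReal.ofReal (Real.exp (a * x)) by
        exact (measurable_exp.comp (measurable_const_mul a)).ennreal_ofReal)]
  have hsplit := (lintegral_add_compl (μ := volume)
    (fun x => (exponentialPDF 1 * fun x => ENNReal.ofReal (Real.exp (a * x))) x)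
    (measurableSet_Iio (a := (0:ℝ)))).symm
  rw [hsplit, Set.compl_Iio]
  have h0 : ∫⁻ x in Set.Iio (0:ℝ),
      (exponentialPDF 1 * fun x => ENNReal.ofReal (Real.exp (a * x))) x = 0 := by
    rw [setLIntegral_congr_fun measurableSet_Iio
      ((fun x (hx : x < 0) =>
        show (exponentialPDF 1 * fun x => ENNReal.ofReal (Real.exp (a * x))) x = 0 by
          simp [exponentialPDF_of_neg hx])), lintegral_zero]
  rw [h0, zero_add]
  have h2 : ∀ x ∈ Set.Ici (0:ℝ),
      (exponentialPDF 1 * fun x => ENNReal.ofReal (Real.exp (a * x))) x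
        = ENNReal.ofReal (Real.exp (-((1 - a) * x))) := by
    intro x hx
    simp only [Pi.mul_apply, exponentialPDF_of_nonneg hx, one_mul]
    rw [← ENNReal.ofReal_mul (Real.exp_pos _).le, ← Real.exp_add]
    congr 2
    ring
  rw [setLIntegral_congr_fun measurableSet_Ici h2,
    setLIntegral_congr (MeasureTheory.Ioi_ae_eq_Ici (a := (0:ℝ))).symm,
    aux_lint_exp_rate (by linarith)]

lemma aux_key {Ω : Type*} [MeasurableSpace Ω] (Pr : Measure Ω) [IsProbabilityMeasure Pr]
    (r : ℕ) (hr : 0 < r) (X : Fin r → Ω → ℝ)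
    (hmeas : ∀ i, Measurable (X i))
    (hindep : iIndepFun X Pr)
    (hdist : ∀ i, Measure.map (X i) Pr = expMeasure 1)
    (μ : Fin r → ℝ) (hμ1 : 0 < μ ⟨0, hr⟩)
    (hμ : ∀ i : Fin r, i ≠ ⟨0, hr⟩ → μ i ≤ 0) :
    ∀ s : Finset (Fin r), (⟨0, hr⟩ : Fin r) ∉ s → ∀ t : ℝ, 0 ≤ t →
    Pr {ω | t < ∑ i ∈ insert ⟨0, hr⟩ s, μ i * X i ω}
      = ENNReal.ofReal
          (Real.exp (-t / μ ⟨0, hr⟩) / ∏ i ∈ s, (1 - μ i / μ ⟨0, hr⟩)) := by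
  classical
  set i0 : Fin r := ⟨0, hr⟩ with hi0
  intro s
  induction s using Finset.induction_on with
  | empty =>
    intro _ t ht
    have hset : {ω | t < ∑ i ∈ insert i0 (∅ : Finset (Fin r)), μ i * X i ω}
        = X i0 ⁻¹' Set.Ioi (t / μ i0) := by
      ext ω
      simp only [Set.mem_setOf_eq, Set.mem_preimage, Set.mem_Ioi,
        Finset.sum_insert (Finset.notMem_empty i0), Finset.sum_empty, add_zero]
      rw [div_lt_iff₀' hμ1]
    rw [hset, ← Measure.map_apply (hmeas i0) measurableSet_Ioi, hdist i0,
      aux_expMeasure_Ioi (div_nonneg ht hμ1.le), Finset.prod_empty, div_one, neg_div]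
  | @insert j s hj ih =>
    intro hs t ht
    have hi0s : i0 ∉ s := fun h => hs (Finset.mem_insert_of_mem h)
    have hji0 : j ≠ i0 := fun h => hs (h ▸ Finset.mem_insert_self j s)
    have hμj : μ j ≤ 0 := hμ j hji0
    set f : Fin r → Ω → ℝ := fun i ω => μ i * X i ω with hf
    have hfmeas : ∀ i, Measurable (f i) := fun i => (hmeas i).const_mul (μ i)
    have hfindep : iIndepFun f Pr :=
      hindep.comp (fun i x => μ i * x) (fun i => measurable_const_mul (μ i))
    have hjnotmem : j ∉ insert i0 s := by
      simp only [Finset.mem_insert]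
      push_neg
      exact ⟨hji0, hj⟩
    have hind : IndepFun (∑ i ∈ insert i0 s, f i) (f j) Pr :=
      hfindep.indepFun_finset_sum_of_notMem hfmeas hjnotmem
    set S : Ω → ℝ := ∑ i ∈ insert i0 s, f i with hS
    have hSmeas : Measurable S := by
      have : S = fun ω => ∑ i ∈ insert i0 s, f i ω := by
        ext ω; simp [hS, Finset.sum_apply]
      rw [this]
      exact Finset.measurable_sum _ fun i _ => hfmeas i
    have hmap : Pr.map (fun ω => (f j ω, S ω)) = (Pr.map (f j)).prod (Pr.map S) :=
      (indepFun_iff_map_prod_eq_prod_map_map (hfmeas j).aemeasurable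
        hSmeas.aemeasurable).mp hind.symm
    have hsetmeas : MeasurableSet {p : ℝ × ℝ | t < p.1 + p.2} :=
      measurableSet_lt measurable_const (measurable_fst.add measurable_snd)
    have hset : {ω | t < ∑ i ∈ insert i0 (insert j s), μ i * X i ω}
        = (fun ω => (f j ω, S ω)) ⁻¹' {p : ℝ × ℝ | t < p.1 + p.2} := by
      ext ω
      simp only [Set.mem_setOf_eq, Set.mem_preimage, hS, Finset.sum_apply]
      rw [Finset.insert_comm, Finset.sum_insert hjnotmem]
    rw [hset, ← Measure.map_apply ((hfmeas j).prodMk hSmeas) hsetmeas, hmap,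
      Measure.prod_apply hsetmeas]
    have hpre : ∀ x : ℝ, (Prod.mk x ⁻¹' {p : ℝ × ℝ | t < p.1 + p.2}) = Set.Ioi (t - x) := by
      intro x; ext y
      simp [sub_lt_iff_lt_add']
    simp_rw [hpre]
    have hanti : Antitone fun u : ℝ => Pr.map S (Set.Ioi u) := fun u v huv =>
      measure_mono (Set.Ioi_subset_Ioi huv)
    have hφmeas : Measurable fun x : ℝ => Pr.map S (Set.Ioi (t - x)) :=
      hanti.measurable.comp (measurable_const.sub measurable_id)
    have hmapfj : Pr.map (f j) = (expMeasure 1).map (fun x => μ j * x) := by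
      rw [← hdist j, Measure.map_map (measurable_const_mul (μ j)) (hmeas j)]
      rfl
    rw [hmapfj, lintegral_map hφmeas (measurable_const_mul (μ j))]
    have hae : ∀ᵐ x ∂(expMeasure 1), 0 ≤ x := by
      rw [ae_iff]
      have hns : {x : ℝ | ¬ 0 ≤ x} = Set.Iio 0 := by ext x; simp only [Set.mem_setOf_eq, Set.mem_Iio, not_le]
      rw [hns]
      exact aux_expMeasure_neg
    set K := ∏ i ∈ s, (1 - μ i / μ i0) with hK
    have hKpos : 0 < K := Finset.prod_pos fun i hi => by
      have h1 : μ i ≤ 0 := hμ i (fun h => hi0s (h ▸ hi))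
      have : μ i / μ i0 ≤ 0 := div_nonpos_of_nonpos_of_nonneg h1 hμ1.le
      linarith
    have hcongr : ∀ᵐ x ∂(expMeasure 1),
        Pr.map S (Set.Ioi (t - μ j * x))
          = ENNReal.ofReal (Real.exp (-(t - μ j * x) / μ i0) / K) := by
      filter_upwards [hae] with x hx
      have hx0 : 0 ≤ t - μ j * x := by nlinarith
      rw [Measure.map_apply hSmeas measurableSet_Ioi]
      have hsS : S ⁻¹' Set.Ioi (t - μ j * x)
          = {ω | t - μ j * x < ∑ i ∈ insert i0 s, μ i * X i ω} := by
        ext ω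
        simp only [Set.mem_preimage, Set.mem_Ioi, Set.mem_setOf_eq, hS, Finset.sum_apply, hf]
      rw [hsS]
      exact ih hi0s _ hx0
    rw [lintegral_congr_ae hcongr]
    have hintgr : ∀ x : ℝ,
        ENNReal.ofReal (Real.exp (-(t - μ j * x) / μ i0) / K)
          = ENNReal.ofReal (Real.exp (-t / μ i0) / K)
            * ENNReal.ofReal (Real.exp ((μ j / μ i0) * x)) := by
      intro x
      rw [← ENNReal.ofReal_mul (by positivity)]
      congr 1
      rw [div_mul_eq_mul_div, ← Real.exp_add]
      congr 2
      field_simp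
      ring
    simp_rw [hintgr]
    rw [lintegral_const_mul _ (show Measurable fun x : ℝ =>
        ENNReal.ofReal (Real.exp (μ j / μ i0 * x)) from
        (measurable_exp.comp (measurable_const_mul _)).ennreal_ofReal),
      aux_lint_mgf (div_nonpos_of_nonpos_of_nonneg hμj hμ1.le),
      ← ENNReal.ofReal_mul (by positivity)]
    congr 1
    rw [Finset.prod_insert hj, ← hK]
    have h1a : (0:ℝ) < 1 - μ j / μ i0 := by
      have : μ j / μ i0 ≤ 0 := div_nonpos_of_nonpos_of_nonneg hμj hμ1.le
      linarith
    field_simp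

/-- If `X 0, …, X (r-1)` are i.i.d. rate-1 exponential random variables,
`μ 0 > 0` and `μ i ≤ 0` for `i ≠ 0`, then
`ℙ(∑ i, μ i * X i > c) = exp (-c / μ 0) / ∏_{i ≠ 0} (1 - μ i / μ 0)` for all `c ≥ 0`. -/
theorem stmt_5 {Ω : Type*} [MeasurableSpace Ω] (Pr : Measure Ω) [IsProbabilityMeasure Pr]
    (r : ℕ) (hr : 0 < r) (X : Fin r → Ω → ℝ)
    (hmeas : ∀ i, Measurable (X i))
    (hindep : iIndepFun X Pr)
    (hdist : ∀ i, Measure.map (X i) Pr = expMeasure 1)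
    (μ : Fin r → ℝ) (hμ1 : 0 < μ ⟨0, hr⟩)
    (hμ : ∀ i : Fin r, i ≠ ⟨0, hr⟩ → μ i ≤ 0)
    (c : ℝ) (hc : 0 ≤ c) :
    Pr {ω | c < ∑ i, μ i * X i ω}
      = ENNReal.ofReal
          (Real.exp (-c / μ ⟨0, hr⟩) /
            ∏ i ∈ Finset.univ.erase ⟨0, hr⟩, (1 - μ i / μ ⟨0, hr⟩)) := by
  have huniv : (Finset.univ : Finset (Fin r))
      = insert ⟨0, hr⟩ (Finset.univ.erase ⟨0, hr⟩) :=
    (Finset.insert_erase (Finset.mem_univ _)).symm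
  rw [show {ω | c < ∑ i, μ i * X i ω}
      = {ω | c < ∑ i ∈ insert ⟨0, hr⟩ (Finset.univ.erase ⟨0, hr⟩), μ i * X i ω} by
    rw [← huniv]]
  exact aux_key Pr r hr X hmeas hindep hdist μ hμ1 hμ _
    (Finset.notMem_erase _ _) c hc
end

section
/- Let $r \ge 1$, $\rho > 0$, and $\mu^* > 0$. Let $\mu_1,\ldots,\mu_r : (0,\infty) \to \mathbb{R}$ be differentiable functions with $\mu_1(x) > 0$ and $\mu_i(x) < \mu_1(x)$ for all $x$ and all $i \ge 2$. Assume that as $x \to \infty$: (i) $\mu_1(x) \to \mu^*$; (ii) $x\,\mu_1'(x) \to 0$; and (iii) for each $i \ge 2$, $\dfrac{\mu_i(x)\,\mu_1'(x)}{\mu_1(x) - \mu_i(x)} \to 0$ and $\dfrac{\mu_i'(x)\,\mu_1(x)}{\mu_1(x) - \mu_i(x)} \to 0$. Define $F(x) = 1 - \dfrac{e^{-x/(\rho\,\mu_1(x))}}{\prod_{i=2}^r \big(1 - \mu_i(x)/\mu_1(x)\big)}$ and the growth function $g(x) = \dfrac{1 - F(x)}{F'(x)}$. Then $\lim_{x \to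 \infty} g(x) = \rho\,\mu^*$. -/
open Filter Finset Real

/-- The growth function `g = (1 - F)/F'` of the SINR CDF
`F x = 1 - exp (-x/(ρ μ₁ x)) / ∏_{i≥2} (1 - μᵢ x / μ₁ x)` converges to `ρ μ*`
as `x → ∞`, under the stated limit assumptions on the eigenvalue functions. -/
theorem stmt_6 (r : ℕ) (hr : 0 < r) (ρ μstar : ℝ) (hρ : 0 < ρ) (hμstar : 0 < μstar)
    (μ : Fin r → ℝ → ℝ)
    (hdiff : ∀ i, DifferentiableOn ℝ (μ i) (Set.Ioi (0 : ℝ)))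
    (hpos : ∀ x > (0 : ℝ), 0 < μ ⟨0, hr⟩ x)
    (hlt : ∀ x > (0 : ℝ), ∀ i : Fin r, i ≠ ⟨0, hr⟩ → μ i x < μ ⟨0, hr⟩ x)
    (h1 : Tendsto (μ ⟨0, hr⟩) atTop (nhds μstar))
    (h2 : Tendsto (fun x => x * deriv (μ ⟨0, hr⟩) x) atTop (nhds 0))
    (h3 : ∀ i : Fin r, i ≠ ⟨0, hr⟩ →
      Tendsto (fun x => μ i x * deriv (μ ⟨0, hr⟩) x / (μ ⟨0, hr⟩ x - μ i x))
        atTop (nhds 0))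
    (h4 : ∀ i : Fin r, i ≠ ⟨0, hr⟩ →
      Tendsto (fun x => deriv (μ i) x * μ ⟨0, hr⟩ x / (μ ⟨0, hr⟩ x - μ i x))
        atTop (nhds 0))
    (F : ℝ → ℝ)
    (hF : F = fun x => 1 - Real.exp (-x / (ρ * μ ⟨0, hr⟩ x)) /
        ∏ i ∈ Finset.univ.erase ⟨0, hr⟩, (1 - μ i x / μ ⟨0, hr⟩ x)) :
    Tendsto (fun x => (1 - F x) / deriv F x) atTop (nhds (ρ * μstar)) := by
  subst hF
  set i₀ : Fin r := ⟨0, hr⟩ with hi₀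
  set m : ℝ → ℝ := μ i₀ with hm
  set S : Finset (Fin r) := Finset.univ.erase i₀ with hS
  have hdiffAt : ∀ (i : Fin r), ∀ x > (0:ℝ), DifferentiableAt ℝ (μ i) x := fun i x hx =>
    (hdiff i x hx).differentiableAt (isOpen_Ioi.mem_nhds hx)
  set L : ℝ → ℝ := fun x => -x / (ρ * m x) - ∑ i ∈ S, Real.log (1 - μ i x / m x) with hL
  set D : ℝ → ℝ := fun x =>
    ((-1) * (ρ * m x) - (-x) * (ρ * deriv m x)) / (ρ * m x) ^ 2
    - ∑ i ∈ S, (-((deriv (μ i) x * m x - μ i x * deriv m x) / (m x) ^ 2) / (1 - μ i x / m x))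
    with hD
  -- basic positivity facts
  have hfac : ∀ x > (0:ℝ), ∀ i ∈ S, 0 < 1 - μ i x / m x := by
    intro x hx i hi
    have hi' : i ≠ i₀ := (Finset.mem_erase.mp hi).1
    have := hlt x hx i hi'
    have hmx := hpos x hx
    rw [sub_pos]
    exact (div_lt_one hmx).mpr this
  -- L has derivative D on Ioi 0
  have key : ∀ x > (0:ℝ), HasDerivAt L (D x) x := by
    intro x hx
    have hmx : 0 < m x := hpos x hx
    have hmd : HasDerivAt m (deriv m x) x := (hdiffAt i₀ x hx).hasDerivAt
    have hden : ρ * m x ≠ 0 := (mul_pos hρ hmx).ne'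
    have h0 : HasDerivAt (fun y => -y / (ρ * m y))
        (((-1) * (ρ * m x) - (-x) * (ρ * deriv m x)) / (ρ * m x) ^ 2) x :=
      ((hasDerivAt_id x).neg.div ((hasDerivAt_const x ρ).mul hmd) hden).congr_deriv (by simp only [Pi.mul_apply, Pi.neg_apply, id_eq]; ring)
    have hsum : HasDerivAt (fun y => ∑ i ∈ S, Real.log (1 - μ i y / m y))
        (∑ i ∈ S, (-((deriv (μ i) x * m x - μ i x * deriv m x) / (m x) ^ 2) / (1 - μ i x / m x))) x := by
      apply HasDerivAt.fun_sum
      intro i hi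
      have hf : HasDerivAt (fun y => 1 - μ i y / m y)
          (-((deriv (μ i) x * m x - μ i x * deriv m x) / (m x) ^ 2)) x := by
        have := ((hdiffAt i x hx).hasDerivAt.div hmd hmx.ne').const_sub 1
        exact this.congr_deriv (by ring)
      exact hf.log (hfac x hx i hi).ne'
    exact h0.sub hsum
  -- 1 - F x = exp (L x) for x > 0
  have hFL : ∀ x > (0:ℝ),
      Real.exp (-x / (ρ * m x)) / ∏ i ∈ S, (1 - μ i x / m x) = Real.exp (L x) := by
    intro x hx
    rw [hL]
    simp only [Real.exp_sub, Real.exp_sum]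
    congr 1
    exact Finset.prod_congr rfl fun i hi => (Real.exp_log (hfac x hx i hi)).symm
  -- deriv F on Ioi 0
  have hderivF : ∀ x > (0:ℝ),
      deriv (fun x => 1 - Real.exp (-x / (ρ * m x)) / ∏ i ∈ S, (1 - μ i x / m x)) x
        = -(Real.exp (L x) * D x) := by
    intro x hx
    have hG : HasDerivAt (fun y => 1 - Real.exp (L y)) (-(Real.exp (L x) * D x)) x :=
      ((key x hx).exp).const_sub 1
    have heq : (fun y => 1 - Real.exp (-y / (ρ * m y)) / ∏ i ∈ S, (1 - μ i y / m y))
        =ᶠ[nhds x] (fun y => 1 - Real.exp (L y)) := by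
      filter_upwards [isOpen_Ioi.mem_nhds hx] with y hy
      rw [hFL y hy]
    rw [heq.deriv_eq]
    exact hG.deriv
  -- limit of D
  have hμne : μstar ≠ 0 := hμstar.ne'
  have hDlim : Tendsto D atTop (nhds (-(ρ * μstar)⁻¹)) := by
    have hA : Tendsto (fun x => (-(m x) + x * deriv m x) / (ρ * (m x) ^ 2)) atTop
        (nhds ((-μstar + 0) / (ρ * μstar ^ 2))) := by
      exact Tendsto.div (h1.neg.add h2) (tendsto_const_nhds.mul (h1.pow 2))
        (by positivity)
    have hB : Tendsto (fun x => ∑ i ∈ S,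
        ((μ i x * deriv m x / (m x - μ i x)) * (m x)⁻¹
          - (deriv (μ i) x * m x / (m x - μ i x)) * (m x)⁻¹)) atTop (nhds 0) := by
      have : Tendsto (fun x => ∑ i ∈ S,
          ((μ i x * deriv m x / (m x - μ i x)) * (m x)⁻¹
            - (deriv (μ i) x * m x / (m x - μ i x)) * (m x)⁻¹)) atTop
          (nhds (∑ i ∈ S, ((0:ℝ) * μstar⁻¹ - 0 * μstar⁻¹))) := by
        apply tendsto_finset_sum
        intro i hi
        have hi' : i ≠ i₀ := (Finset.mem_erase.mp hi).1
        exact ((h3 i hi').mul (h1.inv₀ hμne)).sub ((h4 i hi').mul (h1.inv₀ hμne))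
      simpa using this
    have hAB := hA.sub hB
    have hval : (-μstar + 0) / (ρ * μstar ^ 2) - 0 = -(ρ * μstar)⁻¹ := by
      field_simp; ring
    rw [hval] at hAB
    apply hAB.congr'
    filter_upwards [eventually_gt_atTop (0:ℝ)] with x hx
    have hmx : 0 < m x := hpos x hx
    rw [hD]
    simp only
    congr 1
    · field_simp
      ring
    · apply Finset.sum_congr rfl
      intro i hi
      have hi' : i ≠ i₀ := (Finset.mem_erase.mp hi).1
      have hsub : m x - μ i x ≠ 0 := (sub_pos.mpr (hlt x hx i hi')).ne'
      have hfa : 1 - μ i x / m x ≠ 0 := (hfac x hx i hi).ne'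
      field_simp
      ring
  have hne : (-(ρ * μstar)⁻¹ : ℝ) ≠ 0 := by
    simp only [ne_eq, neg_eq_zero, inv_eq_zero]
    exact (mul_pos hρ hμstar).ne'
  have hDne : ∀ᶠ x in atTop, D x ≠ 0 := hDlim.eventually_ne hne
  -- final
  have hgoal : Tendsto (fun x => -(D x)⁻¹) atTop (nhds (ρ * μstar)) := by
    have h := (hDlim.inv₀ hne).neg
    rwa [inv_neg, inv_inv, neg_neg] at h
  apply hgoal.congr'
  filter_upwards [eventually_gt_atTop (0:ℝ), hDne] with x hx hDx
  have hmx : 0 < m x := hpos x hx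
  have h1F : 1 - (1 - Real.exp (-x / (ρ * m x)) / ∏ i ∈ S, (1 - μ i x / m x))
      = Real.exp (L x) := by rw [hFL x hx]; ring
  rw [hderivF x hx, h1F, div_neg, ← div_div, div_self (Real.exp_pos _).ne', one_div]
end
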